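/- Let S ~ Exp(1), D ∈ (0, 1/2), and q > (1/2 − D)^{−1}. Then, as h ↓ 0, E[((S + h)^{2D} − S^{2D})^{q/2}] / h^{Dq+1} converges to ∫_0^∞ ((1+x)^{2D} − x^{2D})^{q/2} dx, which is a finite positive constant. -/

import Mathlib

open Real Set Filter Topology MeasureTheory

theorem stmt_7 (D q : ℝ) (hD0 : 0 < D) (hD : D < 1/2)
    (hq : q > 1 / (1/2 - D)) :
    MeasureTheory.IntegrableOn
      (fun x : ℝ => ((1 + x) ^ (2 * D) - x ^ (2 * D)) ^ (q / 2)) (Set.Ioi 0) ∧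
    0 < ∫ x in Set.Ioi (0:ℝ), ((1 + x) ^ (2 * D) - x ^ (2 * D)) ^ (q / 2) ∧
    Filter.Tendsto
      (fun h : ℝ =>
        (∫ s in Set.Ioi (0:ℝ),
          ((s + h) ^ (2 * D) - s ^ (2 * D)) ^ (q / 2) * Real.exp (-s)) / h ^ (D * q + 1))
      (nhdsWithin 0 (Set.Ioi 0))
      (nhds (∫ x in Set.Ioi (0:ℝ), ((1 + x) ^ (2 * D) - x ^ (2 * D)) ^ (q / 2))) := by
  set f : ℝ → ℝ := fun x : ℝ => ((1 + x) ^ (2 * D) - x ^ (2 * D)) ^ (q / 2) with hf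
  have h2D0 : 0 < 2 * D := by linarith
  have h2D1 : 2 * D ≤ 1 := by linarith
  have hhalf : 0 < 1/2 - D := by linarith
  have hq0 : 0 < q := lt_trans (by positivity) hq
  have hq2 : 0 ≤ q / 2 := by positivity
  have hq1 : 1 < q * (1/2 - D) := by
    rw [gt_iff_lt, div_lt_iff₀ hhalf] at hq; linarith [hq]
  have hqe : (2 * D - 1) * (q / 2) < -1 := by nlinarith
  -- continuity of f
  have hcont : Continuous f := by
    apply Continuous.rpow_const
    · exact ((continuous_const.add continuous_id).rpow_const
        (fun x => Or.inr h2D0.le)).sub (continuous_id.rpow_const (fun x => Or.inr h2D0.le))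
    · exact fun x => Or.inr hq2
  -- positivity of the inner expression
  have hgpos : ∀ x : ℝ, 0 < x → 0 < (1 + x) ^ (2 * D) - x ^ (2 * D) := by
    intro x hx
    have : x ^ (2 * D) < (1 + x) ^ (2 * D) :=
      Real.rpow_lt_rpow hx.le (by linarith) h2D0
    linarith
  have hfpos : ∀ x : ℝ, 0 < x → 0 < f x := fun x hx =>
    Real.rpow_pos_of_pos (hgpos x hx) _
  have hfnonneg : ∀ x : ℝ, 0 < x → 0 ≤ f x := fun x hx => (hfpos x hx).le
  -- tail bound
  have htail : ∀ x : ℝ, 1 ≤ x →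
      f x ≤ (2 * D) ^ (q / 2) * x ^ ((2 * D - 1) * (q / 2)) := by
    intro x hx
    have hx0 : 0 < x := lt_of_lt_of_le one_pos hx
    have hxinv : 0 < x⁻¹ := inv_pos.mpr hx0
    have hxinv1 : x⁻¹ ≤ 1 := inv_le_one_of_one_le₀ hx
    have hone : (1 : ℝ) + x = x * (1 + x⁻¹) := by field_simp; ring
    have hbern : (1 + x⁻¹) ^ (2 * D) ≤ 1 + (2 * D) * x⁻¹ :=
      rpow_one_add_le_one_add_mul_self (by linarith) h2D0.le h2D1
    have hsub : x ^ (2 * D - 1) = x ^ (2 * D) / x := by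
      rw [Real.rpow_sub hx0, Real.rpow_one]
    have hgb : (1 + x) ^ (2 * D) - x ^ (2 * D) ≤ 2 * D * x ^ (2 * D - 1) := by
      have h1 : (1 + x) ^ (2 * D) = x ^ (2 * D) * (1 + x⁻¹) ^ (2 * D) := by
        rw [hone, Real.mul_rpow hx0.le (by positivity)]
      have h2 : x ^ (2 * D) * (1 + x⁻¹) ^ (2 * D) ≤ x ^ (2 * D) * (1 + (2 * D) * x⁻¹) := by
        apply mul_le_mul_of_nonneg_left hbern (Real.rpow_nonneg hx0.le _)
      rw [h1]
      have h3 : x ^ (2 * D) * (1 + 2 * D * x⁻¹) = x ^ (2 * D) + 2 * D * (x ^ (2 * D) / x) := by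
        field_simp
      rw [hsub]
      calc x ^ (2 * D) * (1 + x⁻¹) ^ (2 * D) - x ^ (2 * D)
          ≤ x ^ (2 * D) * (1 + 2 * D * x⁻¹) - x ^ (2 * D) := by linarith
        _ = 2 * D * (x ^ (2 * D) / x) := by rw [h3]; ring
    calc f x ≤ (2 * D * x ^ (2 * D - 1)) ^ (q / 2) :=
          Real.rpow_le_rpow (le_of_lt (hgpos x hx0)) hgb hq2
      _ = (2 * D) ^ (q / 2) * x ^ ((2 * D - 1) * (q / 2)) := by
          rw [Real.mul_rpow h2D0.le (Real.rpow_nonneg hx0.le _),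
            ← Real.rpow_mul hx0.le]
  -- integrability
  have hInt : MeasureTheory.IntegrableOn f (Set.Ioi 0) := by
    have h1 : MeasureTheory.IntegrableOn f (Set.Ioc 0 1) := hcont.integrableOn_Ioc
    have h2 : MeasureTheory.IntegrableOn f (Set.Ioi 1) := by
      have hbase : MeasureTheory.IntegrableOn
          (fun x : ℝ => (2 * D) ^ (q / 2) * x ^ ((2 * D - 1) * (q / 2))) (Set.Ioi 1) :=
        (integrableOn_Ioi_rpow_of_lt hqe one_pos).const_mul _
      apply MeasureTheory.Integrable.mono' hbase
        (hcont.aestronglyMeasurable.restrict)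
      filter_upwards [MeasureTheory.ae_restrict_mem measurableSet_Ioi] with x hx
      have hx1 : (1 : ℝ) ≤ x := le_of_lt hx
      rw [Real.norm_eq_abs, abs_of_nonneg (hfnonneg x (lt_of_lt_of_le one_pos hx1))]
      exact htail x hx1
    have := h1.union h2
    rwa [Set.Ioc_union_Ioi_eq_Ioi (by norm_num : (0:ℝ) ≤ 1)] at this
  refine ⟨hInt, ?_, ?_⟩
  · -- positivity of the integral
    rw [MeasureTheory.setIntegral_pos_iff_support_of_nonneg_ae ?_ hInt]
    · have hsub : Set.Ioi (0:ℝ) ⊆ Function.support f := fun x hx => (hfpos x hx).ne'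
      rw [Set.inter_eq_self_of_subset_right hsub, Real.volume_Ioi]
      exact ENNReal.zero_lt_top
    · filter_upwards [MeasureTheory.ae_restrict_mem measurableSet_Ioi] with x hx
      exact hfnonneg x hx
  · -- the limit
    set F : ℝ → ℝ := fun h => ∫ x in Set.Ioi (0:ℝ), f x * Real.exp (-(h * x)) with hF
    have hTF : Filter.Tendsto F (nhdsWithin 0 (Set.Ioi 0))
        (nhds (∫ x in Set.Ioi (0:ℝ), f x)) := by
      apply MeasureTheory.tendsto_integral_filter_of_dominated_convergence f
      · apply Filter.Eventually.of_forall
        intro h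
        exact (hcont.mul (Real.continuous_exp.comp
          (continuous_const.mul continuous_id).neg)).aestronglyMeasurable.restrict
      · apply Filter.eventually_of_mem self_mem_nhdsWithin
        intro h hh
        filter_upwards [MeasureTheory.ae_restrict_mem measurableSet_Ioi] with x hx
        rw [Real.norm_eq_abs, abs_of_nonneg
          (mul_nonneg (hfnonneg x hx) (Real.exp_nonneg _))]
        have : Real.exp (-(h * x)) ≤ 1 := by
          rw [Real.exp_le_one_iff]
          have : 0 < h * x := mul_pos hh hx
          linarith
        calc f x * Real.exp (-(h * x)) ≤ f x * 1 :=
              mul_le_mul_of_nonneg_left this (hfnonneg x hx)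
          _ = f x := mul_one _
      · exact hInt
      · filter_upwards [MeasureTheory.ae_restrict_mem measurableSet_Ioi] with x hx
        have hct : Continuous (fun h : ℝ => f x * Real.exp (-(h * x))) :=
          continuous_const.mul (Real.continuous_exp.comp
            ((continuous_id.mul continuous_const).neg))
        have := (hct.tendsto 0).mono_left (nhdsWithin_le_nhds (s := Set.Ioi 0))
        simpa using this
    apply hTF.congr'
    apply Filter.eventually_of_mem self_mem_nhdsWithin
    intro h hh
    have hh0 : (0:ℝ) < h := hh
    -- substitution s = h * x
    set G : ℝ → ℝ := fun s => ((s + h) ^ (2 * D) - s ^ (2 * D)) ^ (q / 2) * Real.exp (-s)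
      with hG
    have key := MeasureTheory.integral_comp_mul_left_Ioi G 0 hh0
    rw [mul_zero] at key
    have hGeq : ∫ x in Set.Ioi (0:ℝ), G (h * x)
        = h ^ (D * q) * F h := by
      rw [show F h = ∫ x in Set.Ioi (0:ℝ), f x * Real.exp (-(h*x)) from rfl,
        ← MeasureTheory.integral_const_mul]
      apply MeasureTheory.setIntegral_congr_fun measurableSet_Ioi
      intro x hx
      have hx0 : (0:ℝ) < x := hx
      have e1 : h * x + h = h * (1 + x) := by ring
      have e2 : (h * (1 + x)) ^ (2 * D) = h ^ (2 * D) * (1 + x) ^ (2 * D) :=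
        Real.mul_rpow hh0.le (by linarith)
      have e3 : (h * x) ^ (2 * D) = h ^ (2 * D) * x ^ (2 * D) :=
        Real.mul_rpow hh0.le hx0.le
      have e4 : (h * x + h) ^ (2 * D) - (h * x) ^ (2 * D)
          = h ^ (2 * D) * ((1 + x) ^ (2 * D) - x ^ (2 * D)) := by
        rw [e1, e2, e3]; ring
      have e5 : (h ^ (2 * D) * ((1 + x) ^ (2 * D) - x ^ (2 * D))) ^ (q / 2)
          = h ^ (D * q) * f x := by
        rw [Real.mul_rpow (Real.rpow_nonneg hh0.le _) (hgpos x hx0).le,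
          ← Real.rpow_mul hh0.le]
        norm_num
        exact congrArg (fun t => h ^ t * f x) (show 2 * D * (q / 2) = D * q by ring)
      show ((h * x + h) ^ (2 * D) - (h * x) ^ (2 * D)) ^ (q / 2) * Real.exp (-(h * x))
          = h ^ (D * q) * (f x * Real.exp (-(h * x)))
      rw [e4, e5]; ring
    -- so the original integral equals h^(D*q+1) * F h
    have hnum : (∫ s in Set.Ioi (0:ℝ), G s) = h ^ (D * q + 1) * F h := by
      have : (∫ s in Set.Ioi (0:ℝ), G s) = h * ∫ x in Set.Ioi (0:ℝ), G (h * x) := by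
        rw [key, smul_eq_mul, ← mul_assoc, mul_inv_cancel₀ hh0.ne', one_mul]
      rw [this, hGeq, Real.rpow_add hh0, Real.rpow_one]
      ring
    show F h = (∫ s in Set.Ioi (0:ℝ), G s) / h ^ (D * q + 1)
    rw [hnum, mul_comm, mul_div_assoc,
      div_self (ne_of_gt (Real.rpow_pos_of_pos hh0 (D * q + 1))), mul_one]
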